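/- In the ApexAddition recursion, if o^{(i)} denotes the state after iteration i, then for every 1 ≤ i ≤ n−2, Σ_{j=i}^{n} oⱼ² = (oᵢ^{(i)})², where o is the final output. -/
import Mathlib


/-- Invariant of the ApexAddition recursion (1-based indexing): writing `O i j`
for the j-th coordinate of the state after iteration i (so the final output is
`O n`), the recursion facts oᵢ = oᵢ^{(h)} for i < h, o^{(i)}_h = 0 for h > i,
and (o_k)² = (o_k^{(k)})² − (o_{k+1}^{(k+1)})² imply
Σ_{j=i}^{n} oⱼ² = (oᵢ^{(i)})² for 1 ≤ i ≤ n−2. -/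
theorem apexAddition_invariant (n : ℕ) (O : ℕ → ℕ → ℝ)
    (hfix : ∀ i h, i < h → h ≤ n → O h i = O n i)
    (hzero : ∀ i h, i < h → O i h = 0)
    (hrec : ∀ k, 1 ≤ k → k ≤ n - 1 →
      (O n k)^2 = (O k k)^2 - (O (k+1) (k+1))^2) :
    ∀ i, 1 ≤ i → i ≤ n - 2 →
      ∑ j ∈ Finset.Icc i n, (O n j)^2 = (O i i)^2 := by
  have key : ∀ d i, 1 ≤ i → i + d = n →
      ∑ j ∈ Finset.Icc i n, (O n j)^2 = (O i i)^2 := by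
    intro d
    induction d with
    | zero =>
      intro i hi hin
      simp only [Nat.add_zero] at hin
      subst hin
      simp
    | succ d ih =>
      intro i hi hin
      have hle : i ≤ n := by omega
      rw [Finset.Icc_eq_cons_Ioc hle, Finset.sum_cons, ← Finset.Icc_add_one_left_eq_Ioc]
      have h2 : ∑ j ∈ Finset.Icc (i+1) n, (O n j)^2 = (O (i+1) (i+1))^2 :=
        ih (i+1) (by omega) (by omega)
      rw [h2, hrec i hi (by omega)]
      ring
  intro i hi hin
  exact key (n - i) i hi (by omega)
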